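/- Let (c_i) (i ≥ 1) be positive integers; for each i let s_{i,1},…,s_{i,c_i} be positive integers and set n_i := s_{i,1}+⋯+s_{i,c_i}; and let (k_i) be positive integers. Assume lim_{i→∞} lim_{j→∞} ∏_{l=i}^{i+j} n_l/(n_l+k_l) = 1 and lim_{i→∞} ∏_{l=1}^{i} c_l/(n_l+k_l) > 0 (all inner limits and the latter limit exist since the corresponding partial products are nonincreasing). For i ≤ m let V_{i,m} := ∏_{l=i}^{m} {1,…,c_l}. Then lim_{i→∞} lim_{j→∞} |{ v ∈ V_{i,i+j} : s_{l,v_l} = 1 for all i ≤ l ≤ i+j }| / (n_i·n_{i+1}⋯n_{i+j}) = 1, where the inner limits exist since the quotients are nonincreasing in j. -/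

import Mathlib

open Filter Finset
open scoped Classical

/-- In the Villadsen construction, almost all coordinate projections of the
composed connecting maps occur with multiplicity one: the proportion (weighted by
multiplicities, i.e. relative to `n_i ⋯ n_{i+j}`) of multi-indices `v` all of whose
multiplicities `s_{l, v_l}` equal `1` tends to `1`. -/
theorem villadsen_multiplicity_one_proportion
    (c k : ℕ → ℕ) (s : ℕ → ℕ → ℕ) (n : ℕ → ℕ)
    (hc : ∀ i, 1 ≤ i → 0 < c i) (hk : ∀ i, 1 ≤ i → 0 < k i)
    (hs : ∀ i j, 1 ≤ i → j ∈ Finset.Icc 1 (c i) → 0 < s i j)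
    (hn : ∀ i, n i = ∑ j ∈ Finset.Icc 1 (c i), s i j)
    (t : ℕ → ℝ)
    (ht : ∀ i, Tendsto (fun j => ∏ l ∈ Finset.Icc i (i + j), (n l : ℝ) / ((n l : ℝ) + k l))
      atTop (nhds (t i)))
    (ht1 : Tendsto t atTop (nhds 1))
    (L : ℝ) (hL : 0 < L)
    (hprod : Tendsto (fun i => ∏ l ∈ Finset.Icc 1 i, (c l : ℝ) / ((n l : ℝ) + k l))
      atTop (nhds L)) :
    ∃ u : ℕ → ℝ,
      (∀ i, Tendsto (fun j =>
          (((((Finset.Icc i (i + j)).pi fun l => Finset.Icc 1 (c l)).filter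
              fun v => ∀ l (hl : l ∈ Finset.Icc i (i + j)), s l (v l hl) = 1).card : ℝ) /
            ∏ l ∈ Finset.Icc i (i + j), (n l : ℝ)))
        atTop (nhds (u i))) ∧
      Tendsto u atTop (nhds 1) := by
  classical
  -- per-level count of multiplicity-one indices
  set a : ℕ → ℕ := fun l => ((Finset.Icc 1 (c l)).filter fun m => s l m = 1).card with ha
  set f : ℕ → ℕ → ℝ := fun i j => ∏ l ∈ Finset.Icc i (i + j), (a l : ℝ) / (n l : ℝ) with hfdef
  -- the ratio in the statement equals f i j
  have hfeq : ∀ i j, ((((Finset.Icc i (i + j)).pi fun l => Finset.Icc 1 (c l)).filter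
              fun v => ∀ l (hl : l ∈ Finset.Icc i (i + j)), s l (v l hl) = 1).card : ℝ) /
            (∏ l ∈ Finset.Icc i (i + j), (n l : ℝ)) = f i j := by
    intro i j
    have h1 : (((Finset.Icc i (i + j)).pi fun l => Finset.Icc 1 (c l)).filter
              fun v => ∀ l (hl : l ∈ Finset.Icc i (i + j)), s l (v l hl) = 1)
        = (Finset.Icc i (i + j)).pi fun l => (Finset.Icc 1 (c l)).filter fun m => s l m = 1 := by
      ext v
      simp only [Finset.mem_filter, Finset.mem_pi]
      exact ⟨fun h l hl => ⟨h.1 l hl, h.2 l hl⟩,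
        fun h => ⟨fun l hl => (h l hl).1, fun l hl => (h l hl).2⟩⟩
    rw [h1, Finset.card_pi, hfdef]
    push_cast
    rw [Finset.prod_div_distrib]
  -- basic bounds
  have hcn : ∀ l, 1 ≤ l → c l ≤ n l := by
    intro l hl
    rw [hn l]
    calc c l = ∑ _m ∈ Finset.Icc 1 (c l), 1 := by simp
    _ ≤ ∑ m ∈ Finset.Icc 1 (c l), s l m :=
        Finset.sum_le_sum fun m hm => hs l m hl hm
  have haln : ∀ l, a l ≤ n l := by
    intro l
    have h1 : a l = ∑ m ∈ (Finset.Icc 1 (c l)).filter (fun m => s l m = 1), s l m := by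
      rw [Finset.sum_congr rfl (fun m hm => (Finset.mem_filter.1 hm).2)]
      simp [ha]
    rw [hn l, h1]
    exact Finset.sum_le_sum_of_subset (Finset.filter_subset _ _)
  have hfac_nonneg : ∀ l, 0 ≤ (a l : ℝ) / (n l : ℝ) := by
    intro l; positivity
  have hfac_le_one : ∀ l, (a l : ℝ) / (n l : ℝ) ≤ 1 := by
    intro l
    rcases Nat.eq_zero_or_pos (n l) with h | h
    · have h0 : a l = 0 := Nat.le_zero.1 (h ▸ haln l)
      simp [h0, h]
    · rw [div_le_one (by exact_mod_cast h)]
      exact_mod_cast haln l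
  have hf_nonneg : ∀ i j, 0 ≤ f i j := fun i j =>
    Finset.prod_nonneg fun l _ => hfac_nonneg l
  have hf_le_one : ∀ i j, f i j ≤ 1 := fun i j =>
    Finset.prod_le_one (fun l _ => hfac_nonneg l) (fun l _ => hfac_le_one l)
  have hf_succ : ∀ i j, f i (j + 1) = f i j * ((a (i + j + 1) : ℝ) / (n (i + j + 1) : ℝ)) := by
    intro i j
    rw [hfdef]
    simp only
    rw [show i + (j + 1) = (i + j + 1) from by omega, ← Finset.Ico_add_one_right_eq_Icc,
      Finset.prod_Ico_succ_top (by omega), Finset.Ico_add_one_right_eq_Icc]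
  have hf_anti : ∀ i, Antitone (f i) := by
    intro i
    refine antitone_nat_of_succ_le fun j => ?_
    rw [hf_succ]
    exact mul_le_of_le_one_right (hf_nonneg i j) (hfac_le_one _)
  have hbdd : ∀ i, BddBelow (Set.range (f i)) := by
    intro i
    exact ⟨0, by rintro x ⟨j, rfl⟩; exact hf_nonneg i j⟩
  refine ⟨fun i => ⨅ j, f i j, fun i => ?_, ?_⟩
  · have h := tendsto_atTop_ciInf (hf_anti i) (hbdd i)
    simpa only [hfeq] using h
  -- second part : the limits tend to 1
  set r : ℕ → ℝ := fun l => (c l : ℝ) / ((n l : ℝ) + (k l : ℝ)) with hr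
  set Q : ℕ → ℝ := fun m => ∏ l ∈ Finset.Ico 1 m, r l with hQ
  have hr_pos : ∀ l, 1 ≤ l → 0 < r l := by
    intro l hl
    have h1 : 0 < c l := hc l hl
    have h2 : (0 : ℝ) < (n l : ℝ) + (k l : ℝ) := by
      have := hcn l hl
      have : 1 ≤ n l := le_trans h1 this
      push_cast
      have : (1 : ℝ) ≤ (n l : ℝ) := by exact_mod_cast this
      positivity
    exact div_pos (by exact_mod_cast h1) h2
  have hr_le_one : ∀ l, 1 ≤ l → r l ≤ 1 := by
    intro l hl
    have h1 : (c l : ℝ) ≤ (n l : ℝ) := by exact_mod_cast hcn l hl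
    have h2 : (0 : ℝ) < (n l : ℝ) + (k l : ℝ) := by
      have := le_trans (hc l hl) (hcn l hl)
      have : (1 : ℝ) ≤ (n l : ℝ) := by exact_mod_cast this
      positivity
    rw [div_le_one h2]
    have : (0 : ℝ) ≤ (k l : ℝ) := by positivity
    linarith
  have hQ_pos : ∀ m, 0 < Q m := fun m =>
    Finset.prod_pos fun l hl => hr_pos l (Finset.mem_Ico.1 hl).1
  have hQ_succ : ∀ m, 1 ≤ m → Q (m + 1) = Q m * r m := by
    intro m hm
    exact Finset.prod_Ico_succ_top hm r
  have hQ_anti : ∀ m m', 1 ≤ m → m ≤ m' → Q m' ≤ Q m := by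
    intro m m' h1 h2
    induction m', h2 using Nat.le_induction with
    | base => exact le_rfl
    | succ m' hm' ih =>
      calc Q (m' + 1) = Q m' * r m' := hQ_succ m' (le_trans h1 hm')
      _ ≤ Q m' := mul_le_of_le_one_right (hQ_pos m').le (hr_le_one m' (le_trans h1 hm'))
      _ ≤ Q m := ih
  have hQ_tend : Tendsto Q atTop (nhds L) := by
    rw [← tendsto_add_atTop_iff_nat 1]
    have heq : (fun i => Q (i + 1)) = fun i => ∏ l ∈ Finset.Icc 1 i, r l := by
      funext i
      rw [hQ]
      simp only [Finset.Ico_add_one_right_eq_Icc]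
    rw [heq]
    exact hprod
  have hQ_ge_L : ∀ m, 1 ≤ m → L ≤ Q m := by
    intro m hm
    exact le_of_tendsto hQ_tend (eventually_atTop.2 ⟨m, fun m' h => hQ_anti m m' hm h⟩)
  -- key per-level inequality : a l / n l ≥ 2 r l - 1
  have hx_ge : ∀ l, 1 ≤ l → 2 * r l - 1 ≤ (a l : ℝ) / (n l : ℝ) := by
    intro l hl
    have hnat : 2 * c l ≤ n l + a l := by
      have hsplit : ∑ m ∈ Finset.Icc 1 (c l), s l m
          = ∑ m ∈ (Finset.Icc 1 (c l)).filter (fun m => s l m = 1), s l m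
            + ∑ m ∈ (Finset.Icc 1 (c l)).filter (fun m => ¬ s l m = 1), s l m :=
        (Finset.sum_filter_add_sum_filter_not _ _ _).symm
      have e1 : ∑ m ∈ (Finset.Icc 1 (c l)).filter (fun m => s l m = 1), s l m = a l := by
        rw [Finset.sum_congr rfl (fun m hm => (Finset.mem_filter.1 hm).2)]
        simp [ha]
      have e2 : 2 * ((Finset.Icc 1 (c l)).filter (fun m => ¬ s l m = 1)).card
          ≤ ∑ m ∈ (Finset.Icc 1 (c l)).filter (fun m => ¬ s l m = 1), s l m := by
        have := Finset.card_nsmul_le_sum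
          ((Finset.Icc 1 (c l)).filter (fun m => ¬ s l m = 1)) (s l) 2
          (fun m hm => by
            have h1 := hs l m hl (Finset.mem_filter.1 hm).1
            have h2 := (Finset.mem_filter.1 hm).2
            omega)
        simpa [smul_eq_mul, mul_comm] using this
      have e3 : a l + ((Finset.Icc 1 (c l)).filter (fun m => ¬ s l m = 1)).card = c l := by
        have := Finset.card_filter_add_card_filter_not
          (s := Finset.Icc 1 (c l)) (p := fun m => s l m = 1)
        simpa [ha, Nat.card_Icc] using this
      have hnl := hn l
      omega
    have hnpos : (0 : ℝ) < (n l : ℝ) := by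
      have := le_trans (hc l hl) (hcn l hl)
      exact_mod_cast this
    have hkpos : (0 : ℝ) ≤ (k l : ℝ) := by positivity
    have h1 : r l ≤ (c l : ℝ) / (n l : ℝ) := by
      apply div_le_div_of_nonneg_left (by positivity) hnpos
      linarith
    have h2 : (2 * (c l : ℝ) - (n l : ℝ)) / (n l : ℝ) ≤ (a l : ℝ) / (n l : ℝ) := by
      apply div_le_div_of_nonneg_right ?_ hnpos.le
      have : (2 * (c l : ℝ)) ≤ (n l : ℝ) + (a l : ℝ) := by exact_mod_cast hnat
      linarith
    have h3 : (2 * (c l : ℝ) - (n l : ℝ)) / (n l : ℝ) = 2 * ((c l : ℝ) / (n l : ℝ)) - 1 := by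
      field_simp
    linarith [h2, h3 ▸ h2, mul_le_mul_of_nonneg_left h1 (by norm_num : (0:ℝ) ≤ 2),
      h3]
  -- the main lower bound by induction on j
  have main : ∀ i, 1 ≤ i → Q i ≤ 2 * L → ∀ j,
      1 - 2 * (Q i - Q (i + j + 1)) / L ≤ f i j := by
    intro i hi hQi
    have hstep : ∀ l, i ≤ l →
        2 * (1 - r l) ≤ 2 * (Q l - Q (l + 1)) / L ∧ (1 : ℝ) / 2 ≤ r l := by
      intro l hl
      have hl1 : 1 ≤ l := le_trans hi hl
      have hQl : L ≤ Q l := hQ_ge_L l hl1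
      have hQl1 : L ≤ Q (l + 1) := hQ_ge_L (l + 1) (by omega)
      have hQli : Q l ≤ Q i := hQ_anti i l hi hl
      have hs1 : Q (l + 1) = Q l * r l := hQ_succ l hl1
      have hQlpos : 0 < Q l := hQ_pos l
      constructor
      · have h1 : 1 - r l = (Q l - Q (l + 1)) / Q l := by
          rw [hs1]
          field_simp
        have hnn : 0 ≤ Q l - Q (l + 1) := by
          have := hQ_anti l (l + 1) hl1 (by omega)
          linarith
        have h2 : (Q l - Q (l + 1)) / Q l ≤ (Q l - Q (l + 1)) / L :=
          div_le_div_of_nonneg_left hnn hL hQl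
        rw [h1, mul_div_assoc]
        linarith
      · have h1 : r l = Q (l + 1) / Q l := by
          rw [hs1, mul_div_cancel_left₀ _ (ne_of_gt hQlpos)]
        rw [h1, le_div_iff₀ hQlpos]
        have : Q l ≤ 2 * L := le_trans hQli hQi
        linarith
    intro j
    induction j with
    | zero =>
      have h0 : f i 0 = (a i : ℝ) / (n i : ℝ) := by
        rw [hfdef]
        simp
      rw [h0]
      have h1 := hx_ge i hi
      have h2 := (hstep i le_rfl).1
      have h3 : i + 0 + 1 = i + 1 := by omega
      rw [h3]
      linarith
    | succ j ih =>
      have hsucc := hf_succ i j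
      set x := (a (i + j + 1) : ℝ) / (n (i + j + 1) : ℝ) with hx
      have hxge := hx_ge (i + j + 1) (by omega)
      have hst := hstep (i + j + 1) (by omega)
      have hxnn : 0 ≤ x := hfac_nonneg _
      have hxle : x ≤ 1 := hfac_le_one _
      have hfnn : 0 ≤ f i j := hf_nonneg i j
      have hfle : f i j ≤ 1 := hf_le_one i j
      set A := 2 * (Q i - Q (i + j + 1)) / L with hA
      set B := 2 * (1 - r (i + j + 1)) with hB
      have hAnn : 0 ≤ A := by
        have h1 : Q (i + j + 1) ≤ Q i := hQ_anti i (i + j + 1) hi (by omega)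
        have : 0 ≤ Q i - Q (i + j + 1) := by linarith
        rw [hA]
        positivity
      have hBnn : 0 ≤ B := by
        have := hr_le_one (i + j + 1) (by omega)
        rw [hB]; linarith
      have hBle : B ≤ 1 := by
        have := hst.2
        rw [hB]; linarith
      have hxB : 1 - B ≤ x := by
        rw [hB]; linarith
      have hsum : 2 * (Q i - Q (i + (j + 1) + 1)) / L = A + 2 * (Q (i + j + 1) - Q (i + j + 2)) / L := by
        rw [hA, show i + (j + 1) + 1 = i + j + 2 from by omega]
        ring
      have hB2 : B ≤ 2 * (Q (i + j + 1) - Q (i + j + 2)) / L := by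
        have := hst.1
        rw [hB]
        convert this using 2
      rw [hsucc, hsum]
      rcases le_or_gt (1 - A) 0 with hcase | hcase
      · have : 0 ≤ f i j * x := mul_nonneg hfnn hxnn
        nlinarith
      · have h1 : (1 - A) * (1 - B) ≤ f i j * x := by
          apply mul_le_mul ih hxB (by linarith) hfnn
        nlinarith
  -- assemble the limit
  have hu_lb : ∀ i, 1 ≤ i → Q i ≤ 2 * L → 1 - 2 * (Q i - L) / L ≤ ⨅ j, f i j := by
    intro i hi hQi
    refine le_ciInf fun j => le_trans ?_ (main i hi hQi j)
    have h1 : L ≤ Q (i + j + 1) := hQ_ge_L (i + j + 1) (by omega)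
    have h2 : (Q i - Q (i + j + 1)) / L ≤ (Q i - L) / L :=
      div_le_div_of_nonneg_right (by linarith) hL.le
    rw [mul_div_assoc, mul_div_assoc]
    linarith
  have hu_ub : ∀ i, (⨅ j, f i j) ≤ 1 := fun i =>
    le_trans (ciInf_le (hbdd i) 0) (hf_le_one i 0)
  have hlow_tend : Tendsto (fun i => 1 - 2 * (Q i - L) / L) atTop (nhds 1) := by
    have h1 : Tendsto (fun i => Q i - L) atTop (nhds 0) := by
      simpa using hQ_tend.sub_const L
    have h2 := ((h1.const_mul 2).div_const L).const_sub 1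
    simpa using h2
  refine tendsto_of_tendsto_of_tendsto_of_le_of_le' hlow_tend tendsto_const_nhds ?_
    (Eventually.of_forall hu_ub)
  filter_upwards [eventually_ge_atTop 1, hQ_tend.eventually_le_const (by linarith : L < 2 * L)]
    with i h1 h2
  exact hu_lb i h1 h2
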